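/- Let f: R^{t+1} → R be the R-linear map sending the i-th standard basis vector to (−1)^i times the i-th maximal minor of M_E, and regard M_E as an R-linear map R^t → R^{t+1}. Then: M_E is injective, the kernel of f equals the image of M_E, and the image of f equals E. In other words, 0 → R^t → R^{t+1} → E → 0 is a free resolution of the ideal E. -/

import Mathlib

open MvPolynomial

noncomputable section

private lemma tele {t : ℕ} {m : ℕ → ℕ} (hm0 : m 0 = 0)
    (hmono : ∀ i, i < t → m i ≤ m (i + 1)) :
    ∀ n, n ≤ t → ∑ r ∈ Finset.range n, (m (r+1) - m r) = m n := by
  intro n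
  induction n with
  | zero => intro _; simpa using hm0.symm
  | succ n ih =>
      intro h
      rw [Finset.sum_range_succ, ih (by omega)]
      have := hmono n (by omega)
      omega

private lemma det_minor (k : Type*) [Field k] (t : ℕ) (m : ℕ → ℕ)
    (hm0 : m 0 = 0) (hmono : ∀ i, i < t → m i ≤ m (i + 1))
    (M : Matrix (Fin (t + 1)) (Fin t) (MvPolynomial (Fin 2) k))
    (hM : M = fun (i : Fin (t + 1)) (j : Fin t) =>
      if (i : ℕ) = (j : ℕ) then (X 1 : MvPolynomial (Fin 2) k) ^ (m ((j : ℕ) + 1) - m (j : ℕ))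
      else if (i : ℕ) = (j : ℕ) + 1 then -X 0 else 0)
    (i : Fin (t + 1)) :
    (M.submatrix i.succAbove id).det
      = X 1 ^ (m (i : ℕ)) * (-X 0) ^ (t - (i : ℕ)) := by
  have hit : (i : ℕ) ≤ t := by omega
  have hsucc : ∀ r : Fin t, ((i.succAbove r : Fin (t+1)) : ℕ)
      = if (r:ℕ) < (i:ℕ) then (r:ℕ) else (r:ℕ)+1 := by
    intro r
    rw [Fin.succAbove]
    split_ifs with h1 h2 h2 <;> simp_all [Fin.lt_def]
  set N := M.submatrix i.succAbove id with hN
  have hNval : ∀ (r c : Fin t), N r c =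
      if (if (r:ℕ) < (i:ℕ) then (r:ℕ) else (r:ℕ)+1) = (c:ℕ)
        then (X 1 : MvPolynomial (Fin 2) k) ^ (m ((c:ℕ) + 1) - m (c:ℕ))
      else if (if (r:ℕ) < (i:ℕ) then (r:ℕ) else (r:ℕ)+1) = (c:ℕ) + 1 then -X 0 else 0 := by
    intro r c
    rw [hN]
    simp only [Matrix.submatrix_apply, id_eq]
    simp only [hM]
    rw [hsucc r]
  set g : Fin t → Fin t := fun r =>
    if h : (r:ℕ) < (i:ℕ) then (⟨(i:ℕ)-1-(r:ℕ), by omega⟩ : Fin t) else r with hgdef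
  have hg : ∀ r : Fin t, ((g r : Fin t) : ℕ)
      = if (r:ℕ) < (i:ℕ) then (i:ℕ)-1-(r:ℕ) else (r:ℕ) := by
    intro r
    rw [hgdef]
    by_cases h : (r:ℕ) < (i:ℕ)
    · simp only [dif_pos h, if_pos h]
    · simp only [dif_neg h, if_neg h]
  have ginv : Function.Involutive g := by
    intro r
    apply Fin.ext
    have h1 := hg (g r)
    rw [hg r] at h1
    rw [h1]
    split_ifs <;> omega
  set e : Equiv.Perm (Fin t) := ⟨g, g, ginv, ginv⟩ with hedef
  have he : ∀ r, e r = g r := fun r => rfl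
  have hdet : N.det = (N.submatrix e e).det := (Matrix.det_submatrix_equiv_self e N).symm
  have htri : (N.submatrix e e).BlockTriangular id := by
    intro a b hab
    have hab' : (b:ℕ) < (a:ℕ) := hab
    show N (e a) (e b) = 0
    rw [he, he, hNval (g a) (g b), hg a, hg b]
    split_ifs <;> first | rfl | omega
  have hdiag : ∀ r : Fin t, N r r
      = if (r:ℕ) < (i:ℕ) then (X 1 : MvPolynomial (Fin 2) k) ^ (m ((r:ℕ)+1) - m (r:ℕ))
        else -X 0 := by
    intro r
    rw [hNval r r]
    split_ifs <;> first | rfl | omega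
  calc N.det = (N.submatrix e e).det := hdet
    _ = ∏ r : Fin t, (N.submatrix e e) r r := Matrix.det_of_upperTriangular htri
    _ = ∏ r : Fin t, N (e r) (e r) := by simp [Matrix.submatrix_apply]
    _ = ∏ r : Fin t, N r r := Equiv.prod_comp e (fun r => N r r)
    _ = ∏ r ∈ Finset.range t, (if r < (i:ℕ)
          then (X 1 : MvPolynomial (Fin 2) k) ^ (m (r+1) - m r) else -X 0) := by
        rw [← Fin.prod_univ_eq_prod_range]
        exact Finset.prod_congr rfl (fun r _ => hdiag r)
    _ = X 1 ^ (m (i : ℕ)) * (-X 0) ^ (t - (i : ℕ)) := by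
        have ht' : t = (i:ℕ) + (t - (i:ℕ)) := by omega
        rw [congrArg Finset.range ht', Finset.prod_range_add]
        congr 1
        · rw [Finset.prod_congr rfl (fun r hr => if_pos (by
              simp only [Finset.mem_range] at hr; omega)),
            Finset.prod_pow_eq_pow_sum, tele hm0 hmono _ hit]
        · rw [Finset.prod_congr rfl (fun r _ => if_neg (by omega))]
          simp

private lemma ite_split {R : Type*} [AddCommMonoid R] (P Q : Prop) [Decidable P] [Decidable Q]
    (a b : R) (h : P → Q → False) :
    (if P then a else if Q then b else 0) = (if P then a else 0) + (if Q then b else 0) := by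
  split_ifs with h1 h2 <;> first | simp | exact absurd (h h1 h2) not_false

private lemma sumR {R : Type*} [AddCommMonoid R] {n : ℕ} (A : Fin n → R) (j : ℕ) :
    (∑ c : Fin n, if j = (c : ℕ) then A c else 0) = if h : j < n then A ⟨j, h⟩ else 0 := by
  by_cases h : j < n
  · rw [dif_pos h, Finset.sum_eq_single ⟨j, h⟩]
    · simp
    · intro c _ hc
      rw [if_neg (fun hj => hc (Fin.ext hj.symm))]
    · simp
  · rw [dif_neg h, Finset.sum_eq_zero]
    intro c _
    rw [if_neg (fun hj => h (by omega))]

private lemma sumR' {R : Type*} [AddCommMonoid R] {n : ℕ} (A : Fin n → R) (j : ℕ) :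
    (∑ c : Fin n, if j = (c : ℕ) + 1 then A c else 0)
      = if h : j - 1 < n ∧ 1 ≤ j then A ⟨j - 1, h.1⟩ else 0 := by
  by_cases h : j - 1 < n ∧ 1 ≤ j
  · rw [dif_pos h, Finset.sum_eq_single ⟨j - 1, h.1⟩]
    · rw [if_pos (by simp; omega)]
    · intro c _ hc
      rw [if_neg (fun hj => hc (Fin.ext (show (c:ℕ) = j - 1 by omega)))]
    · simp
  · rw [dif_neg h, Finset.sum_eq_zero]
    intro c _
    rw [if_neg (fun hj => h (by constructor <;> omega))]

private lemma sumL {R : Type*} [AddCommMonoid R] {n : ℕ} (A : Fin n → R) (j : ℕ) :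
    (∑ c : Fin n, if (c : ℕ) = j then A c else 0) = if h : j < n then A ⟨j, h⟩ else 0 := by
  rw [← sumR A j]
  exact Finset.sum_congr rfl fun c _ => by by_cases hc : (c:ℕ) = j <;> simp [hc, Ne.symm, eq_comm]

private lemma mulVec_row {k : Type*} [Field k] {t : ℕ} (m : ℕ → ℕ)
    (M : Matrix (Fin (t + 1)) (Fin t) (MvPolynomial (Fin 2) k))
    (hM : M = fun (i : Fin (t + 1)) (j : Fin t) =>
      if (i : ℕ) = (j : ℕ) then (X 1 : MvPolynomial (Fin 2) k) ^ (m ((j : ℕ) + 1) - m (j : ℕ))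
      else if (i : ℕ) = (j : ℕ) + 1 then -X 0 else 0)
    (v : Fin t → MvPolynomial (Fin 2) k) (j : Fin (t + 1)) :
    M.mulVec v j
      = (if h : (j : ℕ) < t then X 1 ^ (m ((j:ℕ) + 1) - m (j:ℕ)) * v ⟨(j:ℕ), h⟩ else 0)
        + (if h : (j : ℕ) - 1 < t ∧ 1 ≤ (j : ℕ) then -X 0 * v ⟨(j:ℕ) - 1, h.1⟩ else 0) := by
  subst hM
  simp only [Matrix.mulVec, dotProduct]
  have : ∀ c : Fin t,
      (if (j : ℕ) = (c : ℕ) then (X 1 : MvPolynomial (Fin 2) k) ^ (m ((c : ℕ) + 1) - m (c : ℕ))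
        else if (j : ℕ) = (c : ℕ) + 1 then -X 0 else 0) * v c
      = (if (j:ℕ) = (c:ℕ) then X 1 ^ (m ((c:ℕ) + 1) - m (c:ℕ)) * v c else 0)
        + (if (j:ℕ) = (c:ℕ) + 1 then -X 0 * v c else 0) := by
    intro c
    rw [ite_mul, ite_mul, zero_mul, ite_split _ _ _ _ (by omega)]
  rw [Finset.sum_congr rfl fun c _ => this c, Finset.sum_add_distrib,
    sumR (fun c : Fin t => X 1 ^ (m ((c:ℕ) + 1) - m (c:ℕ)) * v c) (j:ℕ),
    sumR' (fun c : Fin t => -X 0 * v c) (j:ℕ)]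

private lemma prime_X1 (k : Type*) [Field k] : Prime (X 1 : MvPolynomial (Fin 2) k) := by
  have e1 : Prime (X 0 : MvPolynomial (Fin 2) k) := by
    rw [← MulEquiv.prime_iff (MvPolynomial.finSuccEquiv k 1).toMulEquiv]
    have : (MvPolynomial.finSuccEquiv k 1).toMulEquiv (X 0) = Polynomial.X := by
      simp [finSuccEquiv_X_zero]
    rw [this]
    exact Polynomial.prime_X
  have h := (MulEquiv.prime_iff (MvPolynomial.renameEquiv k (Equiv.swap (0:Fin 2) 1)).toMulEquiv
      (p := (X 0 : MvPolynomial (Fin 2) k))).symm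
  have h2 : (MvPolynomial.renameEquiv k (Equiv.swap (0:Fin 2) 1)).toMulEquiv (X 0) = X 1 := by
    simp [renameEquiv_apply, rename_X]
  rw [h2] at h
  exact h.mp e1

private lemma X1_not_dvd_X0 (k : Type*) [Field k] :
    ¬ (X 1 : MvPolynomial (Fin 2) k) ∣ X 0 := by
  rintro ⟨q, hq⟩
  have := congrArg (eval fun j : Fin 2 => if j = 0 then (1:k) else 0) hq
  simp at this

/-- Let `M_E` be the Hilbert–Burch matrix of the monomial ideal
`E = (x^t, x^{t-1}y^{m_1}, …, y^{m_t})` and let `f : R^{t+1} → R` be the `R`-linear map sending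
the `i`-th standard basis vector to `(-1)^i` times the `i`-th maximal minor of `M_E`
(rows indexed by `Fin (t+1)`; the `0`-indexed row `i` is the `1`-indexed row `i+1`, whence the
sign `(-1)^(i+1)`).  Then `M_E : R^t → R^{t+1}` is injective, `ker f = range M_E`, and
`range f = E`; i.e. `0 → R^t → R^{t+1} → E → 0` is a free resolution of `E`. -/
theorem stmt2 (k : Type*) [Field k] (t : ℕ) (ht : 1 ≤ t) (m : ℕ → ℕ)
    (hm0 : m 0 = 0) (hmono : ∀ i, i < t → m i ≤ m (i + 1))
    (E : Ideal (MvPolynomial (Fin 2) k))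
    (hE : E = Ideal.span
      ((fun i : ℕ => (X 0 : MvPolynomial (Fin 2) k) ^ (t - i) * X 1 ^ (m i)) '' Set.Iic t))
    (M : Matrix (Fin (t + 1)) (Fin t) (MvPolynomial (Fin 2) k))
    (hM : M = fun (i : Fin (t + 1)) (j : Fin t) =>
      if (i : ℕ) = (j : ℕ) then (X 1 : MvPolynomial (Fin 2) k) ^ (m ((j : ℕ) + 1) - m (j : ℕ))
      else if (i : ℕ) = (j : ℕ) + 1 then -X 0 else 0)
    (f : (Fin (t + 1) → MvPolynomial (Fin 2) k) →ₗ[MvPolynomial (Fin 2) k]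
          MvPolynomial (Fin 2) k)
    (hf : ∀ i : Fin (t + 1), f (Pi.single i 1) =
      (-1) ^ ((i : ℕ) + 1) * (M.submatrix i.succAbove id).det) :
    Function.Injective M.mulVecLin ∧
    LinearMap.ker f = LinearMap.range M.mulVecLin ∧
    LinearMap.range f = E := by
  classical
  have hyne : (X 1 : MvPolynomial (Fin 2) k) ≠ 0 := X_ne_zero 1
  have hmle : ∀ a b : ℕ, a ≤ b → b ≤ t → m a ≤ m b := by
    intro a b
    induction b with
    | zero =>
        intro hab _
        have ha : a = 0 := by omega
        subst ha; exact le_rfl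
    | succ n ih =>
        intro hab hbt
        rcases Nat.eq_or_lt_of_le hab with h | h
        · subst h; exact le_rfl
        · exact le_trans (ih (by omega) (by omega)) (hmono n (by omega))
  set G : Fin (t+1) → MvPolynomial (Fin 2) k :=
    fun i => X 0 ^ (t - (i:ℕ)) * X 1 ^ (m (i:ℕ)) with hG
  set c : MvPolynomial (Fin 2) k := (-1) ^ (t+1) with hc
  have hcc : c * c = 1 := by
    rw [hc, ← pow_add]; exact Even.neg_one_pow ⟨t+1, by ring⟩
  have hfi : ∀ i : Fin (t+1), f (Pi.single i 1) = c * G i := by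
    intro i
    rw [hf i, det_minor k t m hm0 hmono M hM i, neg_pow (X 0 : MvPolynomial (Fin 2) k)]
    calc (-1:MvPolynomial (Fin 2) k)^((i:ℕ)+1)
          * (X 1 ^ (m (i:ℕ)) * ((-1)^(t-(i:ℕ)) * X 0 ^ (t-(i:ℕ))))
        = (-1)^(((i:ℕ)+1) + (t - (i:ℕ))) * (X 0 ^ (t-(i:ℕ)) * X 1 ^ (m (i:ℕ))) := by
          rw [pow_add]; ring
      _ = c * G i := by rw [show ((i:ℕ)+1) + (t - (i:ℕ)) = t+1 by omega, hc, hG]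
  have hps : ∀ i : Fin (t+1),
      (fun j => if i = j then (1 : MvPolynomial (Fin 2) k) else 0) = Pi.single i 1 := by
    intro i; funext j; simp [Pi.single_apply, eq_comm]
  have hfv : ∀ v, f v = ∑ i, v i * (c * G i) := by
    intro v
    rw [LinearMap.pi_apply_eq_sum_univ f v]
    refine Finset.sum_congr rfl fun i _ => ?_
    rw [hps i, hfi i, smul_eq_mul]
  -- Part 1 : injectivity
  have hinj : Function.Injective M.mulVecLin := by
    refine (injective_iff_map_eq_zero _).mpr fun v hv => ?_
    have hv' : M.mulVec v = 0 := by rwa [Matrix.mulVecLin_apply] at hv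
    have hrow : ∀ (n : ℕ) (hn : n < t+1),
        (if h : n < t then X 1 ^ (m (n+1) - m n) * v ⟨n, h⟩ else 0)
          + (if h : n - 1 < t ∧ 1 ≤ n then -X 0 * v ⟨n-1, h.1⟩ else 0) = 0 := by
      intro n hn
      rw [← mulVec_row m M hM v ⟨n, hn⟩]
      exact congrFun hv' ⟨n, hn⟩
    have key : ∀ n, ∀ hn : n < t, v ⟨n, hn⟩ = 0 := by
      intro n
      induction n with
      | zero =>
          intro hn
          have h0 := hrow 0 (by omega)
          rw [dif_pos hn, dif_neg (by omega), add_zero] at h0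
          rcases mul_eq_zero.mp h0 with h | h
          · exact absurd h (pow_ne_zero _ hyne)
          · exact h
      | succ p ih =>
          intro hn
          have h0 := hrow (p+1) (by omega)
          rw [dif_pos hn, dif_pos (by omega)] at h0
          simp only [Nat.add_sub_cancel] at h0
          have h2 : X 1 ^ (m (p+1+1) - m (p+1)) * v ⟨p+1, hn⟩ = 0 := by
            linear_combination h0 + X 0 * ih (by omega)
          rcases mul_eq_zero.mp h2 with h | h
          · exact absurd h (pow_ne_zero _ hyne)
          · exact h
    funext j
    rw [Pi.zero_apply]
    obtain ⟨n, hn⟩ := j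
    exact key n hn
  -- f ∘ M = 0
  have hinner : ∀ j : Fin t, ∑ i : Fin (t+1), M i j * G i = 0 := by
    intro j
    have hsplit : ∀ i : Fin (t+1), M i j * G i
        = (if (i:ℕ) = (j:ℕ) then X 1 ^ (m ((j:ℕ)+1) - m (j:ℕ)) * G i else 0)
          + (if (i:ℕ) = (j:ℕ) + 1 then -X 0 * G i else 0) := by
      intro i
      rw [hM]
      simp only []
      rw [ite_mul, ite_mul, zero_mul, ite_split _ _ _ _ (by omega)]
    rw [Finset.sum_congr rfl fun i _ => hsplit i, Finset.sum_add_distrib,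
      sumL (fun i : Fin (t+1) => X 1 ^ (m ((j:ℕ)+1) - m (j:ℕ)) * G i) (j:ℕ),
      sumL (fun i : Fin (t+1) => -X 0 * G i) ((j:ℕ)+1),
      dif_pos (show (j:ℕ) < t+1 by omega), dif_pos (show (j:ℕ)+1 < t+1 by omega)]
    rw [hG]
    simp only [Fin.val_mk]
    have h1 : m (j:ℕ) + (m ((j:ℕ)+1) - m (j:ℕ)) = m ((j:ℕ)+1) := by
      have := hmono (j:ℕ) j.isLt; omega
    have h2 : (t - ((j:ℕ)+1)) + 1 = t - (j:ℕ) := by omega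
    have e1 : (X 1 : MvPolynomial (Fin 2) k) ^ (m ((j:ℕ)+1) - m (j:ℕ))
          * (X 0 ^ (t - (j:ℕ)) * X 1 ^ (m (j:ℕ)))
        = X 0 ^ (t - (j:ℕ)) * X 1 ^ (m ((j:ℕ)+1)) := by
      conv_rhs => rw [← h1]
      rw [pow_add]; ring
    have e2 : (-X 0 : MvPolynomial (Fin 2) k)
          * (X 0 ^ (t - ((j:ℕ)+1)) * X 1 ^ (m ((j:ℕ)+1)))
        = -(X 0 ^ (t - (j:ℕ)) * X 1 ^ (m ((j:ℕ)+1))) := by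
      conv_rhs => rw [← h2]
      rw [pow_add, pow_one]; ring
    linear_combination e1 + e2
  have hcomp : ∀ w : Fin t → MvPolynomial (Fin 2) k, f (M.mulVecLin w) = 0 := by
    intro w
    rw [hfv]
    have hterm : ∀ i : Fin (t+1), M.mulVecLin w i * (c * G i)
        = ∑ j : Fin t, (w j * c) * (M i j * G i) := by
      intro i
      rw [Matrix.mulVecLin_apply]
      show (∑ jj : Fin t, M i jj * w jj) * (c * G i) = _
      rw [Finset.sum_mul]
      exact Finset.sum_congr rfl fun jj _ => by ring
    rw [Finset.sum_congr rfl fun i _ => hterm i, Finset.sum_comm]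
    refine Finset.sum_eq_zero fun j _ => ?_
    rw [← Finset.mul_sum, hinner j, mul_zero]
  -- ker f ⊆ range M
  have hkerle : LinearMap.ker f ≤ LinearMap.range M.mulVecLin := by
    intro v hv
    rw [LinearMap.mem_ker, hfv v] at hv
    have hsum0 : ∑ i, v i * G i = 0 := by
      have h1 : c * ∑ i, v i * G i = 0 := by
        rw [Finset.mul_sum, ← hv]
        exact Finset.sum_congr rfl fun i _ => by ring
      calc ∑ i, v i * G i = (c * c) * ∑ i, v i * G i := by rw [hcc, one_mul]
        _ = c * 0 := by rw [mul_assoc, h1]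
        _ = 0 := mul_zero c
    set v' : ℕ → MvPolynomial (Fin 2) k :=
      fun n => if h : n < t+1 then v ⟨n, h⟩ else 0 with hv'def
    have hv'eval : ∀ (n : ℕ) (h : n < t+1), v' n = v ⟨n, h⟩ := by
      intro n h
      simp only [hv'def]
      rw [dif_pos h]
    set S : ℕ → MvPolynomial (Fin 2) k :=
      fun j => ∑ i ∈ Finset.range (j+1), v' i * X 0 ^ (j - i) * X 1 ^ (m i) with hSdef
    have hSrec : ∀ j, S (j+1) = X 0 * S j + v' (j+1) * X 1 ^ (m (j+1)) := by
      intro j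
      simp only [hSdef]
      rw [Finset.sum_range_succ]
      congr 1
      · rw [Finset.mul_sum]
        refine Finset.sum_congr rfl fun i hi => ?_
        rw [Finset.mem_range] at hi
        rw [show j + 1 - i = (j - i) + 1 by omega, pow_succ]
        ring
      · simp
    have hFt : S t = 0 := by
      have hst : S t = ∑ i : Fin (t+1), v i * G i := by
        simp only [hSdef]
        rw [← Fin.sum_univ_eq_sum_range (fun i => v' i * X 0 ^ (t - i) * X 1 ^ (m i)) (t+1)]
        refine Finset.sum_congr rfl fun i _ => ?_
        rw [hv'eval (i:ℕ) i.isLt]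
        have hi : (⟨(i:ℕ), i.isLt⟩ : Fin (t+1)) = i := Fin.ext rfl
        rw [hi]
        simp only [hG]
        ring
      rw [hst, hsum0]
    have hFt0 : ∑ i ∈ Finset.range (t+1), v' i * X 0 ^ (t - i) * X 1 ^ (m i) = 0 := hFt
    have hdvd : ∀ j, j < t → (X 1 : MvPolynomial (Fin 2) k) ^ (m (j+1)) ∣ S j := by
      intro j hj
      have h1 : X 0 ^ (t-j) * S j
          = ∑ i ∈ Finset.range (j+1), v' i * X 0 ^ (t-i) * X 1 ^ (m i) := by
        simp only [hSdef]
        rw [Finset.mul_sum]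
        refine Finset.sum_congr rfl fun i hi => ?_
        rw [Finset.mem_range] at hi
        rw [show t - i = (t-j) + (j-i) by omega, pow_add]
        ring
      have hsplit := Finset.sum_range_add
        (fun i => v' i * X 0 ^ (t-i) * X 1 ^ (m i)) (j+1) (t-j)
      rw [show (j+1)+(t-j) = t+1 by omega] at hsplit
      have key : X 0^(t-j) * S j
          = - ∑ r ∈ Finset.range (t-j),
              v' ((j+1)+r) * X 0 ^ (t-((j+1)+r)) * X 1 ^ (m ((j+1)+r)) := by
        rw [h1]
        linear_combination hFt0 - hsplit
      have hdvd2 : (X 1 : MvPolynomial (Fin 2) k) ^ (m (j+1)) ∣ X 0 ^ (t-j) * S j := by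
        rw [key, dvd_neg]
        refine Finset.dvd_sum fun r hr => ?_
        rw [Finset.mem_range] at hr
        exact Dvd.dvd.mul_left
          (pow_dvd_pow _ (hmle (j+1) ((j+1)+r) (by omega) (by omega))) _
      exact (prime_X1 k).pow_dvd_of_dvd_mul_left _
        (fun hdx => X1_not_dvd_X0 k ((prime_X1 k).dvd_of_dvd_pow hdx)) hdvd2
    have hex : ∀ j : Fin t, ∃ u, S (j:ℕ) = X 1 ^ (m ((j:ℕ)+1)) * u := by
      intro j
      obtain ⟨u, hu⟩ := hdvd (j:ℕ) j.isLt
      exact ⟨u, hu⟩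
    choose w hw using hex
    have hw' : ∀ (n : ℕ) (h : n < t), S n = X 1 ^ (m (n+1)) * w ⟨n, h⟩ :=
      fun n h => hw ⟨n, h⟩
    refine ⟨w, ?_⟩
    rw [Matrix.mulVecLin_apply]
    funext j
    rw [mulVec_row m M hM w j, ← hv'eval (j:ℕ) j.isLt]
    have main : ∀ n, n < t+1 →
        (if h : n < t then X 1 ^ (m (n+1) - m n) * w ⟨n, h⟩ else 0)
          + (if h : n - 1 < t ∧ 1 ≤ n then -X 0 * w ⟨n-1, h.1⟩ else 0) = v' n := by
      intro n hn
      rcases Nat.eq_zero_or_pos n with rfl | hpos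
      · rw [dif_pos (by omega), dif_neg (by omega), add_zero]
        have hS0 : S 0 = v' 0 := by
          simp only [hSdef]
          simp [hm0]
        have hwz := hw' 0 (by omega)
        rw [show m (0+1) - m 0 = m (0+1) by omega]
        linear_combination hS0 - hwz
      · by_cases hlt : n < t
        · obtain ⟨p, rfl⟩ : ∃ p, n = p + 1 := ⟨n - 1, by omega⟩
          rw [dif_pos hlt, dif_pos (by omega)]
          simp only [Nat.add_sub_cancel]
          have hcan : X 1 ^ (m (p+1)) * (X 1 ^ (m (p+1+1) - m (p+1)) * w ⟨p+1, hlt⟩)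
              = X 1 ^ (m (p+1)) * (X 0 * w ⟨p, by omega⟩ + v' (p+1)) := by
            rw [← mul_assoc, ← pow_add,
              show m (p+1) + (m (p+1+1) - m (p+1)) = m (p+1+1) by
                have := hmono (p+1) (by omega); omega,
              ← hw' (p+1) hlt, hSrec p, hw' p (by omega)]
            ring
          have hcan' := mul_left_cancel₀ (pow_ne_zero (m (p+1)) hyne) hcan
          linear_combination hcan'
        · obtain ⟨p, rfl⟩ : ∃ p, n = p + 1 := ⟨n - 1, by omega⟩
          have hpt : p + 1 = t := by omega
          rw [dif_neg (by omega), dif_pos (by omega), zero_add]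
          simp only [Nat.add_sub_cancel]
          have h0 : S (p + 1) = 0 := by rw [hpt]; exact hFt
          rw [hSrec p, hw' p (by omega)] at h0
          have h1 : (X 1 : MvPolynomial (Fin 2) k) ^ (m (p+1))
              * (X 0 * w ⟨p, by omega⟩ + v' (p+1)) = X 1 ^ (m (p+1)) * 0 := by
            rw [mul_zero]
            linear_combination h0
          have h2 := mul_left_cancel₀ (pow_ne_zero (m (p+1)) hyne) h1
          linear_combination -h2
    exact main (j:ℕ) j.isLt
  have hkerge : LinearMap.range M.mulVecLin ≤ LinearMap.ker f := by
    rintro p ⟨w, rfl⟩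
    exact hcomp w
  -- range f = E
  have hrle : LinearMap.range f ≤ E := by
    rintro p ⟨v, rfl⟩
    rw [hfv v, hE]
    refine Submodule.sum_mem _ fun i _ => ?_
    have hmem : (X 0 : MvPolynomial (Fin 2) k) ^ (t - (i:ℕ)) * X 1 ^ (m (i:ℕ))
        ∈ Ideal.span ((fun i : ℕ =>
          (X 0 : MvPolynomial (Fin 2) k) ^ (t - i) * X 1 ^ (m i)) '' Set.Iic t) :=
      Ideal.subset_span ⟨(i:ℕ), by simp [Set.mem_Iic]; omega, rfl⟩
    have heq : v i * (c * G i)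
        = (v i * c) * ((X 0 : MvPolynomial (Fin 2) k) ^ (t - (i:ℕ)) * X 1 ^ (m (i:ℕ))) := by
      rw [hG]; ring
    rw [heq]
    exact Ideal.mul_mem_left _ _ hmem
  have hrge : E ≤ LinearMap.range f := by
    rw [hE, Ideal.span_le]
    rintro p ⟨n, hn, rfl⟩
    rw [Set.mem_Iic] at hn
    refine ⟨c • (Pi.single (⟨n, by omega⟩ : Fin (t+1)) 1 :
      Fin (t+1) → MvPolynomial (Fin 2) k), ?_⟩
    rw [map_smul, hfi, smul_eq_mul, ← mul_assoc, hcc, one_mul]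
  exact ⟨hinj, le_antisymm hkerle hkerge, le_antisymm hrle hrge⟩
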